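/- For polynomials p, q in ℂ[z_0,…,z_{m−1}] and any index i, the Bessel–Fischer pairing satisfies the adjointness relation ⟨z_i p, q⟩_B = ⟨p, B̃(z_i) q⟩_B, where B̃(z_i) is the modified Bessel operator. -/

import Mathlib

open MvPolynomial

noncomputable section

/-- Complex polynomials in the variables `z_0, …, z_{m−1}`. -/
abbrev Pm (m : ℕ) := MvPolynomial (Fin m) ℂ

/-- The diagonal entries of the bilinear form `β`: `β_{00} = −1`, `β_{kk} = 1` for `k ≥ 1`. -/
def sgn (m : ℕ) (i : Fin m) : ℂ := if (i : ℕ) = 0 then -1 else 1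

/-- The plain partial derivative `∂^i` as a linear operator. -/
def DOp (m : ℕ) (i : Fin m) : Module.End ℂ (Pm m) := (pderiv i).toLinearMap

/-- The lowered partial derivative `∂_i = ∑_k β_{ik} ∂^k`. -/
def dlow (m : ℕ) (i : Fin m) : Module.End ℂ (Pm m) := sgn m i • DOp m i

/-- Multiplication by the variable `z_i`. -/
def mulX (m : ℕ) (i : Fin m) : Module.End ℂ (Pm m) := LinearMap.mulLeft ℂ (X i)

/-- The Euler operator `E = ∑_{i,j} β^{ij} z_i ∂_j`. -/
def EOp (m : ℕ) : Module.End ℂ (Pm m) := ∑ i, sgn m i • (mulX m i * dlow m i)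

/-- The Laplacian `Δ = ∑_{i,j} β^{ij} ∂_i ∂_j`. -/
def LapOp (m : ℕ) : Module.End ℂ (Pm m) := ∑ i, sgn m i • (dlow m i * dlow m i)

/-- The Bessel operator `B(z_i) = (m − 2 + 2E)∂_i − z_i Δ` (parameter `λ = 2 − m`). -/
def BOp (m : ℕ) (i : Fin m) : Module.End ℂ (Pm m) :=
  (((m : ℂ) - 2) • (1 : Module.End ℂ (Pm m)) + (2 : ℂ) • EOp m) * dlow m i
    - mulX m i * LapOp m

/-- The modified Bessel operator: `B̃(z_0) = −B(z_0)`, `B̃(z_k) = B(z_k)` for `k ≥ 1`. -/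
def BtOp (m : ℕ) (i : Fin m) : Module.End ℂ (Pm m) := sgn m i • BOp m i

/-- The Bessel–Fischer product `⟨p,q⟩_B := (p(B̃) q̄)(0)`: substitute the modified
Bessel operators for the variables of `p`, apply to the coefficient-conjugate of `q`,
and evaluate at `0`. -/
def BF (m : ℕ) (p q : Pm m) : ℂ :=
  eval (0 : Fin m → ℂ)
    (((∑ α ∈ p.support, p.coeff α • (List.ofFn fun i : Fin m => (BtOp m i) ^ (α i)).prod) :
        Module.End ℂ (Pm m)) (map (starRingEnd ℂ) q))

/-- The angular momentum operator `L_{ij} = z_i ∂_j − z_j ∂_i`. -/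
def LOp (m : ℕ) (i j : Fin m) : Module.End ℂ (Pm m) :=
  mulX m i * dlow m j - mulX m j * dlow m i

/-- The squared radial coordinate `R² = ∑_{i,j} β^{ij} z_i z_j`. -/
def R2 (m : ℕ) : Pm m := ∑ i, sgn m i • (X i * X i)


lemma DOp_apply (m : ℕ) (i : Fin m) (p : Pm m) : DOp m i p = pderiv i p := rfl
lemma mulX_apply (m : ℕ) (i : Fin m) (p : Pm m) : mulX m i p = X i * p := rfl

lemma D_comm (m : ℕ) (i j : Fin m) : DOp m i * DOp m j = DOp m j * DOp m i := by
  refine LinearMap.ext fun p => ?_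
  simp only [Module.End.mul_apply, DOp_apply]
  rcases eq_or_ne i j with rfl | h
  · rfl
  · induction p using MvPolynomial.induction_on' with
    | monomial s a =>
      simp only [pderiv_monomial]
      rw [Finsupp.tsub_apply, Finsupp.tsub_apply, Finsupp.single_apply, Finsupp.single_apply,
        if_neg h, if_neg (Ne.symm h), tsub_zero, tsub_zero, tsub_tsub, tsub_tsub, add_comm]
      ring_nf
    | add p q hp hq => simp [hp, hq]

lemma D_mul_X (m : ℕ) (i j : Fin m) :
    DOp m i * mulX m j = mulX m j * DOp m i + (if i = j then 1 else 0) := by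
  refine LinearMap.ext fun p => ?_
  simp only [Module.End.mul_apply, LinearMap.add_apply, DOp_apply, mulX_apply]
  rw [pderiv_mul]
  rcases eq_or_ne i j with rfl | h
  · simp [add_comm]
  · simp [Ne.symm h, h]

lemma X_comm (m : ℕ) (i j : Fin m) : mulX m i * mulX m j = mulX m j * mulX m i := by
  refine LinearMap.ext fun p => ?_
  simp only [Module.End.mul_apply, mulX_apply]
  ring

lemma sgn_mul_self (m : ℕ) (i : Fin m) : sgn m i * sgn m i = 1 := by
  unfold sgn; split <;> norm_num

lemma EOp_eq (m : ℕ) : EOp m = ∑ k, mulX m k * DOp m k := by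
  unfold EOp dlow
  refine Finset.sum_congr rfl fun k _ => ?_
  rw [mul_smul_comm, smul_smul, sgn_mul_self, one_smul]

lemma LapOp_eq (m : ℕ) : LapOp m = ∑ k, sgn m k • (DOp m k * DOp m k) := by
  unfold LapOp dlow
  refine Finset.sum_congr rfl fun k _ => ?_
  rw [smul_mul_assoc, mul_smul_comm, smul_smul, smul_smul]
  congr 1
  rw [mul_assoc, sgn_mul_self, mul_one]

lemma D_E (m : ℕ) (i : Fin m) : DOp m i * EOp m = EOp m * DOp m i + DOp m i := by
  rw [EOp_eq, Finset.mul_sum, Finset.sum_mul]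
  have step : ∀ k : Fin m, DOp m i * (mulX m k * DOp m k)
      = mulX m k * DOp m k * DOp m i + (if i = k then DOp m k else 0) := by
    intro k
    rw [← mul_assoc, D_mul_X, add_mul, ite_mul, one_mul, zero_mul,
      mul_assoc, D_comm m i k, ← mul_assoc]
  simp only [step]
  rw [Finset.sum_add_distrib, Finset.sum_ite_eq]
  simp

lemma E_X (m : ℕ) (i : Fin m) : EOp m * mulX m i = mulX m i * EOp m + mulX m i := by
  rw [EOp_eq, Finset.mul_sum, Finset.sum_mul]
  have step : ∀ k : Fin m, mulX m k * DOp m k * mulX m i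
      = mulX m i * (mulX m k * DOp m k) + (if k = i then mulX m k else 0) := by
    intro k
    rw [mul_assoc, D_mul_X, mul_add, mul_ite, mul_one, mul_zero,
      ← mul_assoc, X_comm m k i, mul_assoc]
  simp only [step]
  rw [Finset.sum_add_distrib, Finset.sum_ite_eq']
  simp

lemma Lap_D (m : ℕ) (i : Fin m) : LapOp m * DOp m i = DOp m i * LapOp m := by
  rw [LapOp_eq, Finset.mul_sum, Finset.sum_mul]
  refine Finset.sum_congr rfl fun k _ => ?_
  rw [smul_mul_assoc, mul_smul_comm, mul_assoc, D_comm m k i, ← mul_assoc, D_comm m k i, mul_assoc]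

lemma Lap_X (m : ℕ) (i : Fin m) :
    LapOp m * mulX m i = mulX m i * LapOp m + (2 * sgn m i) • DOp m i := by
  rw [LapOp_eq, Finset.mul_sum, Finset.sum_mul]
  have step : ∀ k : Fin m, sgn m k • (DOp m k * DOp m k) * mulX m i
      = mulX m i * (sgn m k • (DOp m k * DOp m k))
        + ((if k = i then (2 * sgn m k) • DOp m k else 0)) := by
    intro k
    rcases eq_or_ne k i with rfl | h
    · rw [if_pos rfl, smul_mul_assoc, mul_smul_comm, mul_assoc, D_mul_X, if_pos rfl]
      rw [mul_add, mul_one, ← mul_assoc, D_mul_X, if_pos rfl, add_mul, one_mul]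
      rw [mul_assoc, smul_add, smul_add, two_mul, add_smul]
      abel
    · rw [if_neg h, add_zero, smul_mul_assoc, mul_smul_comm, mul_assoc, D_mul_X, if_neg h,
        add_zero, ← mul_assoc, D_mul_X, if_neg h, add_zero, mul_assoc]
  simp only [step]
  rw [Finset.sum_add_distrib, Finset.sum_ite_eq']
  simp

lemma Lap_E (m : ℕ) : LapOp m * EOp m = EOp m * LapOp m + (2:ℂ) • LapOp m := by
  conv_lhs => rw [EOp_eq, Finset.mul_sum]
  conv_rhs => rw [EOp_eq, Finset.sum_mul]
  have step : ∀ k : Fin m, LapOp m * (mulX m k * DOp m k)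
      = mulX m k * DOp m k * LapOp m + (2:ℂ) • (sgn m k • (DOp m k * DOp m k)) := by
    intro k
    rw [← mul_assoc, Lap_X, add_mul, mul_assoc, Lap_D, ← mul_assoc, smul_mul_assoc,
      smul_smul, two_mul, add_smul]
  simp only [step]
  rw [Finset.sum_add_distrib, ← Finset.smul_sum, ← LapOp_eq]

def Cop (m : ℕ) : Module.End ℂ (Pm m) :=
  ((m : ℂ) - 2) • (1 : Module.End ℂ (Pm m)) + (2 : ℂ) • EOp m

lemma C_D (m : ℕ) (i : Fin m) :
    Cop m * DOp m i = DOp m i * Cop m - (2:ℂ) • DOp m i := by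
  have hED : EOp m * DOp m i = DOp m i * EOp m - DOp m i := by rw [D_E]; abel
  unfold Cop
  rw [add_mul, smul_mul_assoc, one_mul, smul_mul_assoc, hED, mul_add, mul_smul_comm,
    mul_one, mul_smul_comm]
  module

lemma C_X (m : ℕ) (i : Fin m) :
    Cop m * mulX m i = mulX m i * Cop m + (2:ℂ) • mulX m i := by
  unfold Cop
  rw [add_mul, smul_mul_assoc, one_mul, smul_mul_assoc, E_X, mul_add, mul_smul_comm,
    mul_one, mul_smul_comm]
  module

lemma Lap_C (m : ℕ) :
    LapOp m * Cop m = Cop m * LapOp m + (4:ℂ) • LapOp m := by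
  unfold Cop
  rw [mul_add, mul_smul_comm, mul_one, mul_smul_comm, Lap_E, add_mul, smul_mul_assoc,
    one_mul, smul_mul_assoc]
  module

lemma BtOp_eq (m : ℕ) (i : Fin m) :
    BtOp m i = Cop m * DOp m i - sgn m i • (mulX m i * LapOp m) := by
  unfold BtOp BOp dlow Cop
  rw [mul_smul_comm, smul_sub, smul_smul, sgn_mul_self, one_smul]

lemma Bt_comm (m : ℕ) (i j : Fin m) : BtOp m i * BtOp m j = BtOp m j * BtOp m i := by
  rcases eq_or_ne i j with rfl | hne
  · rfl
  have key : ∀ a b : Fin m, a ≠ b →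
      BtOp m a * BtOp m b =
        (Cop m * (Cop m * (DOp m a * DOp m b)) + (2:ℂ) • (Cop m * (DOp m a * DOp m b)))
        - sgn m b • (Cop m * (mulX m b * (DOp m a * LapOp m)))
        - sgn m a • (Cop m * (mulX m a * (DOp m b * LapOp m))
            + (2:ℂ) • (mulX m a * (DOp m b * LapOp m)))
        + (sgn m a * sgn m b) • (mulX m a * (mulX m b * (LapOp m * LapOp m))
            + (2 * sgn m b) • (mulX m a * (DOp m b * LapOp m))) := by
    intro a b hab
    have hdx : DOp m a * mulX m b = mulX m b * DOp m a := by
      rw [D_mul_X, if_neg hab, add_zero]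
    have hdc : DOp m a * Cop m = Cop m * DOp m a + (2:ℂ) • DOp m a := by
      rw [C_D]; abel
    have hxc : mulX m a * Cop m = Cop m * mulX m a - (2:ℂ) • mulX m a := by
      rw [C_X]; abel
    have hA : Cop m * DOp m a * (Cop m * DOp m b)
        = Cop m * (Cop m * (DOp m a * DOp m b)) + (2:ℂ) • (Cop m * (DOp m a * DOp m b)) := by
      calc Cop m * DOp m a * (Cop m * DOp m b) = Cop m * ((DOp m a * Cop m) * DOp m b) := by
            rw [mul_assoc, ← mul_assoc (DOp m a)]
        _ = _ := by
            rw [hdc, add_mul, smul_mul_assoc, mul_add, mul_smul_comm, mul_assoc]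
    have hB : Cop m * DOp m a * (mulX m b * LapOp m)
        = Cop m * (mulX m b * (DOp m a * LapOp m)) := by
      rw [mul_assoc, ← mul_assoc (DOp m a), hdx, mul_assoc (mulX m b)]
    have hC : mulX m a * LapOp m * (Cop m * DOp m b)
        = Cop m * (mulX m a * (DOp m b * LapOp m))
          + (2:ℂ) • (mulX m a * (DOp m b * LapOp m)) := by
      calc mulX m a * LapOp m * (Cop m * DOp m b)
          = mulX m a * ((LapOp m * Cop m) * DOp m b) := by
            rw [mul_assoc, ← mul_assoc (LapOp m)]
        _ = mulX m a * (Cop m * (DOp m b * LapOp m))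
            + (4:ℂ) • (mulX m a * (DOp m b * LapOp m)) := by
            rw [Lap_C, add_mul, smul_mul_assoc, mul_assoc, Lap_D, mul_add, mul_smul_comm]
        _ = _ := by
            rw [← mul_assoc (mulX m a), hxc, sub_mul, smul_mul_assoc, mul_assoc]
            module
    have hD : mulX m a * LapOp m * (mulX m b * LapOp m)
        = mulX m a * (mulX m b * (LapOp m * LapOp m))
          + (2 * sgn m b) • (mulX m a * (DOp m b * LapOp m)) := by
      calc mulX m a * LapOp m * (mulX m b * LapOp m)
          = mulX m a * ((LapOp m * mulX m b) * LapOp m) := by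
            rw [mul_assoc, ← mul_assoc (LapOp m)]
        _ = _ := by
            rw [Lap_X, add_mul, smul_mul_assoc, mul_add, mul_smul_comm, mul_assoc]
    rw [BtOp_eq m a, BtOp_eq m b, sub_mul, mul_sub, mul_sub, smul_mul_assoc, smul_mul_assoc,
      mul_smul_comm, mul_smul_comm, smul_smul, hA, hB, hC, hD]
    module
  rw [key i j hne, key j i hne.symm, D_comm m j i,
    show mulX m j * (mulX m i * (LapOp m * LapOp m))
        = mulX m i * (mulX m j * (LapOp m * LapOp m)) by
      rw [← mul_assoc, X_comm, mul_assoc]]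
  match_scalars <;> (simp only [sgn]; try split_ifs) <;> ring

lemma sgn_conj (m : ℕ) (i : Fin m) : (starRingEnd ℂ) (sgn m i) = sgn m i := by
  unfold sgn; split <;> simp

lemma conj_smul (m : ℕ) (a : ℂ) (ha : (starRingEnd ℂ) a = a) (q : Pm m) :
    map (starRingEnd ℂ) (a • q) = a • map (starRingEnd ℂ) q := by
  rw [smul_eq_C_mul, map_mul, map_C, ha, ← smul_eq_C_mul]

lemma conj_D (m : ℕ) (i : Fin m) (q : Pm m) :
    map (starRingEnd ℂ) (DOp m i q) = DOp m i (map (starRingEnd ℂ) q) :=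
  (pderiv_map).symm

lemma conj_X (m : ℕ) (i : Fin m) (q : Pm m) :
    map (starRingEnd ℂ) (mulX m i q) = mulX m i (map (starRingEnd ℂ) q) := by
  rw [mulX_apply, mulX_apply, map_mul, map_X]

lemma conj_dlow (m : ℕ) (i : Fin m) (q : Pm m) :
    map (starRingEnd ℂ) (dlow m i q) = dlow m i (map (starRingEnd ℂ) q) := by
  unfold dlow
  rw [LinearMap.smul_apply, conj_smul m _ (sgn_conj m i), conj_D, LinearMap.smul_apply]

lemma conj_E (m : ℕ) (q : Pm m) :
    map (starRingEnd ℂ) (EOp m q) = EOp m (map (starRingEnd ℂ) q) := by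
  unfold EOp
  rw [LinearMap.sum_apply, LinearMap.sum_apply, map_sum]
  refine Finset.sum_congr rfl fun k _ => ?_
  rw [LinearMap.smul_apply, LinearMap.smul_apply, conj_smul m _ (sgn_conj m k),
    Module.End.mul_apply, Module.End.mul_apply, conj_X, conj_dlow]

lemma conj_Lap (m : ℕ) (q : Pm m) :
    map (starRingEnd ℂ) (LapOp m q) = LapOp m (map (starRingEnd ℂ) q) := by
  unfold LapOp
  rw [LinearMap.sum_apply, LinearMap.sum_apply, map_sum]
  refine Finset.sum_congr rfl fun k _ => ?_
  rw [LinearMap.smul_apply, LinearMap.smul_apply, conj_smul m _ (sgn_conj m k),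
    Module.End.mul_apply, Module.End.mul_apply, conj_dlow, conj_dlow]

lemma conj_Bt (m : ℕ) (i : Fin m) (q : Pm m) :
    map (starRingEnd ℂ) (BtOp m i q) = BtOp m i (map (starRingEnd ℂ) q) := by
  unfold BtOp BOp
  rw [LinearMap.smul_apply, LinearMap.smul_apply, conj_smul m _ (sgn_conj m i)]
  congr 1
  rw [LinearMap.sub_apply, LinearMap.sub_apply, map_sub]
  congr 1
  · rw [Module.End.mul_apply, Module.End.mul_apply, LinearMap.add_apply, LinearMap.add_apply,
      LinearMap.smul_apply, LinearMap.smul_apply, LinearMap.smul_apply, LinearMap.smul_apply,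
      Module.End.one_apply, Module.End.one_apply, map_add,
      conj_smul m _ (by simp [map_sub, Complex.conj_natCast, Complex.conj_ofNat] : (starRingEnd ℂ) ((m:ℂ)-2) = (m:ℂ)-2),
      conj_smul m _ (Complex.conj_ofNat 2), conj_dlow, conj_E, conj_dlow]
  · rw [Module.End.mul_apply, Module.End.mul_apply, conj_X, conj_Lap]

lemma ofFn_prod_mul {M : Type*} [Monoid M] :
    ∀ (n : ℕ) (b : Fin n → M), (∀ k l, Commute (b k) (b l)) → ∀ (e : Fin n → ℕ) (i : Fin n),
    (List.ofFn fun k => b k ^ (e k + if k = i then 1 else 0)).prod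
      = (List.ofFn fun k => b k ^ e k).prod * b i := by
  intro n
  induction n with
  | zero => exact fun b _ e i => i.elim0
  | succ n ih =>
    intro b hb e i
    rw [List.ofFn_succ, List.ofFn_succ, List.prod_cons, List.prod_cons]
    rcases Fin.eq_zero_or_eq_succ i with rfl | ⟨j, rfl⟩
    · have htail : ∀ k : Fin n, (if k.succ = (0 : Fin (n+1)) then 1 else 0) = 0 := by
        intro k; simp [Fin.succ_ne_zero]
      simp only [htail, add_zero, if_pos rfl, if_true]
      have hcomm : Commute (b 0) (List.ofFn fun k : Fin n => b k.succ ^ e k.succ).prod := by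
        apply Commute.list_prod_right
        intro x hx
        rw [List.mem_ofFn] at hx
        obtain ⟨k, rfl⟩ := hx
        exact (hb 0 k.succ).pow_right _
      rw [pow_succ, mul_assoc, hcomm.eq, ← mul_assoc]
    · have hhead : (if (0 : Fin (n+1)) = j.succ then 1 else 0) = 0 := by
        simp [(Fin.succ_ne_zero j).symm]
      rw [hhead, add_zero]
      have := ih (fun k => b k.succ) (fun k l => hb k.succ l.succ) (fun k => e k.succ) j
      have hiff : ∀ k : Fin n, (if k.succ = j.succ then 1 else 0)
          = (if k = j then 1 else 0) := by
        intro k; simp [Fin.succ_inj]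
      simp only [hiff] at this ⊢
      rw [this, ← mul_assoc]


/-- Adjointness: `⟨z_i p, q⟩_B = ⟨p, B̃(z_i) q⟩_B`. -/
theorem stmt9 (m : ℕ) (i : Fin m) (p q : Pm m) :
    BF m (X i * p) q = BF m p (BtOp m i q) := by
  classical
  have hop : (∑ α ∈ (X i * p).support, (X i * p).coeff α •
        (List.ofFn fun k : Fin m => (BtOp m k) ^ (α k)).prod)
      = (∑ α ∈ p.support, p.coeff α •
        (List.ofFn fun k : Fin m => (BtOp m k) ^ (α k)).prod) * BtOp m i := by
    rw [support_X_mul, Finset.sum_map, Finset.sum_mul]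
    refine Finset.sum_congr rfl fun α _ => ?_
    rw [addLeftEmbedding_apply, coeff_X_mul, smul_mul_assoc]
    congr 1
    have happ : ∀ k : Fin m, (Finsupp.single i (1:ℕ) + α) k = α k + if k = i then 1 else 0 := by
      intro k
      rw [Finsupp.add_apply, Finsupp.single_apply, add_comm]
      congr 1
      simp [eq_comm]
    simp only [happ]
    exact ofFn_prod_mul m (BtOp m) (fun k l => (Bt_comm m k l)) α i
  unfold BF
  rw [hop, Module.End.mul_apply, conj_Bt]
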